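/- Let b_n be a sequence of nonzero complex numbers with c_1 ≤ |b_n| ≤ c_2 for positive constants c_1, c_2, and let a_n be nonzero complex numbers with |a_{2n+1}/a_{2n}| ≤ c_3 for all n. Let B_n satisfy the recurrence B_n = b_n B_{n-1} + a_n B_{n-2} (with B_{-1} = 0, B_0 = 1), and set r_n = B_n / B_{n-1} (assuming B_n ≠ 0 for all large n). Then it is impossible that simultaneously |r_{2n}| → ∞ and |r_{2n+1}| → 0 as n → ∞. -/

import Mathlib

open Filter Topology

/-- Key technical step of the general-divergence theorem.  Let `b n` be nonzero
complex numbers with `c1 ≤ |b n| ≤ c2` (for `n ≥ 1`), `a n` nonzero with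
`|a_{2n+1}/a_{2n}| ≤ c3`, and let `B` satisfy
`B n = b n * B (n-1) + a n * B (n-2)` with `B₋₁ = 0`, `B₀ = 1`
(indexing: `B (n+1)` corresponds to subscript `n`), with `B n ≠ 0` for all large
`n`, and `r n = B n / B (n-1)` (so `r (n+1) = B (n+2)/B (n+1)` here, `r`'s
subscript `n` being index `n`, defined for `n ≥ 1`).  Then one cannot have
simultaneously `|r (2n)| → ∞` and `|r (2n+1)| → 0`. -/
theorem not_ratio_even_atTop_and_odd_zero
    (a b B r : ℕ → ℂ) (c1 c2 c3 : ℝ)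
    (hc1 : 0 < c1) (hc2 : 0 < c2) (hc3 : 0 < c3)
    (hbne : ∀ n, 1 ≤ n → b n ≠ 0)
    (hane : ∀ n, 1 ≤ n → a n ≠ 0)
    (hb : ∀ n, 1 ≤ n → c1 ≤ ‖b n‖ ∧ ‖b n‖ ≤ c2)
    (hratio : ∀ n, 1 ≤ n → ‖a (2 * n + 1) / a (2 * n)‖ ≤ c3)
    (hB0 : B 0 = 0) (hB1 : B 1 = 1)
    (hB : ∀ n, B (n + 2) = b (n + 1) * B (n + 1) + a (n + 1) * B n)
    (hBne : ∃ N, ∀ n, N ≤ n → B n ≠ 0)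
    (hr : ∀ n, 1 ≤ n → r n = B (n + 1) / B n) :
    ¬ (Tendsto (fun n => ‖r (2 * n)‖) atTop atTop ∧
        Tendsto (fun n => ‖r (2 * n + 1)‖) atTop (𝓝 0)) := by
  rintro ⟨heven, hodd⟩
  obtain ⟨N0, hN0⟩ := hBne
  set ε := min (c1 / 2) (c1 / (8 * c3)) with hεdef
  have hεpos : 0 < ε := lt_min (by positivity) (by positivity)
  have hε1 : ε ≤ c1 / 2 := min_le_left _ _
  have hε2 : ε ≤ c1 / (8 * c3) := min_le_right _ _
  obtain ⟨N1, hN1⟩ := eventually_atTop.mp (hodd.eventually_lt_const hεpos)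
  obtain ⟨N2, hN2⟩ := eventually_atTop.mp (heven.eventually_ge_atTop c2)
  -- key identity: r m * (r (m+1) - b (m+1)) = a (m+1)
  have key : ∀ m, 1 ≤ m → B m ≠ 0 → B (m + 1) ≠ 0 →
      r m * (r (m + 1) - b (m + 1)) = a (m + 1) := by
    intro m hm h0 h1
    rw [hr m hm, hr (m + 1) (by omega), hB m]
    field_simp
    ring
  set k := max N0 (max N1 N2) with hk
  have hk0 : N0 ≤ k := le_max_left _ _
  have hk1 : N1 ≤ k := le_trans (le_max_left _ _) (le_max_right _ _)
  have hk2 : N2 ≤ k := le_trans (le_max_right _ _) (le_max_right _ _)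
  have E2 : r (2 * k + 1) * (r (2 * k + 2) - b (2 * k + 2)) = a (2 * k + 2) :=
    key (2 * k + 1) (by omega) (hN0 _ (by omega)) (hN0 _ (by omega))
  have E1 : r (2 * k + 2) * (r (2 * k + 3) - b (2 * k + 3)) = a (2 * k + 3) :=
    key (2 * k + 2) (by omega) (hN0 _ (by omega)) (hN0 _ (by omega))
  have E1a : ‖r (2 * k + 2)‖ * ‖r (2 * k + 3) - b (2 * k + 3)‖
      = ‖a (2 * k + 3)‖ := by rw [← norm_mul, E1]
  have E2a : ‖r (2 * k + 1)‖ * ‖r (2 * k + 2) - b (2 * k + 2)‖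
      = ‖a (2 * k + 2)‖ := by rw [← norm_mul, E2]
  have hA2pos : 0 < ‖a (2 * k + 2)‖ :=
    norm_pos_iff.mpr (hane _ (by omega))
  have hA : ‖a (2 * k + 3)‖ ≤ c3 * ‖a (2 * k + 2)‖ := by
    have h := hratio (k + 1) (by omega)
    rw [norm_div] at h
    have h2 : ‖a (2 * (k + 1) + 1)‖ ≤ c3 * ‖a (2 * (k + 1))‖ :=
      (div_le_iff₀ hA2pos).mp h
    simpa [Nat.mul_add] using h2
  -- bounds
  have hrodd1 : ‖r (2 * k + 1)‖ < ε := hN1 k hk1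
  have hrodd3 : ‖r (2 * k + 3)‖ < ε := by
    have := hN1 (k + 1) (by omega)
    simpa [Nat.mul_add] using this
  have hreven : c2 ≤ ‖r (2 * k + 2)‖ := by
    have := hN2 (k + 1) (by omega)
    simpa [Nat.mul_add] using this
  have hb2 := hb (2 * k + 2) (by omega)
  have hb3 := hb (2 * k + 3) (by omega)
  -- |r(2k+3) - b(2k+3)| ≥ c1 - ε
  have hZ : c1 - ε ≤ ‖r (2 * k + 3) - b (2 * k + 3)‖ := by
    have h := norm_sub_norm_le (b (2 * k + 3)) (r (2 * k + 3))
    rw [norm_sub_rev] at h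
    linarith [hb3.1]
  -- |r(2k+2) - b(2k+2)| ≤ |r(2k+2)| + c2
  have hY : ‖r (2 * k + 2) - b (2 * k + 2)‖
      ≤ ‖r (2 * k + 2)‖ + c2 := by
    have h := norm_sub_le (r (2 * k + 2)) (b (2 * k + 2))
    linarith [hb2.2]
  set X := ‖r (2 * k + 2)‖ with hX
  set Y := ‖r (2 * k + 2) - b (2 * k + 2)‖ with hYdef
  set Z := ‖r (2 * k + 3) - b (2 * k + 3)‖ with hZdef
  set w := ‖r (2 * k + 1)‖ with hw
  have hXpos : 0 < X := lt_of_lt_of_le hc2 hreven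
  have hYnn : 0 ≤ Y := norm_nonneg _
  have hwnn : 0 ≤ w := norm_nonneg _
  have s1 : X * (c1 / 2) ≤ X * Z :=
    mul_le_mul_of_nonneg_left (by linarith) (le_of_lt hXpos)
  have s2 : c3 * (w * Y) ≤ c3 * ((c1 / (8 * c3)) * Y) := by
    apply mul_le_mul_of_nonneg_left _ (le_of_lt hc3)
    exact mul_le_mul_of_nonneg_right (by linarith) hYnn
  have s3 : c3 * ((c1 / (8 * c3)) * Y) = (c1 / 8) * Y := by
    field_simp
  have chain : X * (c1 / 2) ≤ (c1 / 8) * (X + c2) := by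
    have h1 : X * Z = ‖a (2 * k + 3)‖ := E1a
    have h2 : w * Y = ‖a (2 * k + 2)‖ := E2a
    have h3 : (c1 / 8) * Y ≤ (c1 / 8) * (X + c2) :=
      mul_le_mul_of_nonneg_left hY (by positivity)
    calc X * (c1 / 2) ≤ X * Z := s1
      _ = ‖a (2 * k + 3)‖ := h1
      _ ≤ c3 * ‖a (2 * k + 2)‖ := hA
      _ = c3 * (w * Y) := by rw [h2]
      _ ≤ (c1 / 8) * Y := by linarith [s2, s3.symm.le]
      _ ≤ (c1 / 8) * (X + c2) := h3
  nlinarith [chain, hreven, hc1, hc2, hXpos]
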